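/- Let F : ℝ × ℝ² ⇉ ℝ² be a set-valued map, K a set, and suppose there exist ν, ε > 0 such that for all t and all x ≠ y in K ∩ Σ, every v_x ∈ F(t,x) and v_y ∈ F(t,y) satisfy ⟨(x−y)/‖x−y‖, v_x − v_y⟩ ≤ −(ν + ε). Then any two solutions x(t), y(t) with x'(t) ∈ F(t,x(t)), y'(t) ∈ F(t,y(t)) a.e., remaining in K ∩ Σ with x(t) ≠ y(t) on an interval, satisfy (d/dt)‖x(t) − y(t)‖ ≤ −(ν + ε) for almost every t in that interval; in particular ‖x(t) − y(t)‖ ≤ ‖x(0) − y(0)‖ − (ν + ε) t as long as the right side stays positive. -/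

import Mathlib

open MeasureTheory Filter Set
open scoped RealInnerProductSpace

theorem auxHasDerivAtNorm {E : Type*} [NormedAddCommGroup E] [InnerProductSpace ℝ E]
    {g : ℝ → E} {g' : E} {t : ℝ} (hg : HasDerivAt g g' t) (h0 : g t ≠ 0) :
    HasDerivAt (fun s => ‖g s‖) ⟪(‖g t‖)⁻¹ • g t, g'⟫ t := by
  have hq : HasDerivAt (fun s => ⟪g s, g s⟫) (⟪g t, g'⟫ + ⟪g', g t⟫) t := hg.inner ℝ hg
  have hq0 : ⟪g t, g t⟫ ≠ 0 := fun h => h0 (inner_self_eq_zero.1 h)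
  have hs : HasDerivAt (fun s => Real.sqrt ⟪g s, g s⟫)
      (1 / (2 * Real.sqrt ⟪g t, g t⟫) * (⟪g t, g'⟫ + ⟪g', g t⟫)) t :=
    (Real.hasDerivAt_sqrt hq0).comp t hq
  have hfun : (fun s => Real.sqrt ⟪g s, g s⟫) = fun s => ‖g s‖ := by
    funext s
    rw [real_inner_self_eq_norm_sq, Real.sqrt_sq (norm_nonneg _)]
  rw [hfun] at hs
  have hn : ‖g t‖ ≠ 0 := norm_ne_zero_iff.2 h0
  have hsq : Real.sqrt ⟪g t, g t⟫ = ‖g t‖ := by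
    rw [real_inner_self_eq_norm_sq, Real.sqrt_sq (norm_nonneg _)]
  convert hs using 1
  rw [hsq, real_inner_smul_left, real_inner_comm g' (g t)]
  field_simp
  ring

theorem stmt_19 (n : ℕ)
    (F : ℝ → EuclideanSpace ℝ (Fin n) → Set (EuclideanSpace ℝ (Fin n)))
    (K Sig : Set (EuclideanSpace ℝ (Fin n)))
    (ν ε : ℝ) (hν : 0 < ν) (hε : 0 < ε)
    (hdir : ∀ t : ℝ, ∀ x ∈ K ∩ Sig, ∀ y ∈ K ∩ Sig, x ≠ y →
      ∀ vx ∈ F t x, ∀ vy ∈ F t y,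
        ⟪(‖x - y‖)⁻¹ • (x - y), vx - vy⟫ ≤ -(ν + ε))
    (a b : ℝ) (hab : a < b)
    (x y : ℝ → EuclideanSpace ℝ (Fin n))
    (x' y' : ℝ → EuclideanSpace ℝ (Fin n))
    (Lx Ly : NNReal)
    (hxLip : LipschitzOnWith Lx x (Set.Icc a b))
    (hyLip : LipschitzOnWith Ly y (Set.Icc a b))
    (hx : ∀ᵐ t ∂volume, t ∈ Set.Ioo a b →
      HasDerivAt x (x' t) t ∧ x' t ∈ F t (x t))
    (hy : ∀ᵐ t ∂volume, t ∈ Set.Ioo a b →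
      HasDerivAt y (y' t) t ∧ y' t ∈ F t (y t))
    (hmem : ∀ t ∈ Set.Icc a b, x t ∈ K ∩ Sig ∧ y t ∈ K ∩ Sig)
    (hne : ∀ t ∈ Set.Icc a b, x t ≠ y t) :
    (∀ᵐ t ∂volume, t ∈ Set.Ioo a b →
      deriv (fun s => ‖x s - y s‖) t ≤ -(ν + ε)) ∧
    (∀ t ∈ Set.Icc a b, 0 < ‖x a - y a‖ - (ν + ε) * (t - a) →
      ‖x t - y t‖ ≤ ‖x a - y a‖ - (ν + ε) * (t - a)) := by
  set c : ℝ := ν + ε with hc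
  have hc0 : 0 < c := by positivity
  set f : ℝ → ℝ := fun s => ‖x s - y s‖ with hf
  set D : ℝ → ℝ := fun t => ⟪(‖x t - y t‖)⁻¹ • (x t - y t), x' t - y' t⟫ with hD
  -- the main a.e. derivative statement
  have hA : ∀ᵐ t ∂volume, t ∈ Set.Ioo a b → HasDerivAt f (D t) t ∧ D t ≤ -c := by
    filter_upwards [hx, hy] with t hxt hyt ht
    have htI : t ∈ Set.Icc a b := Set.mem_Icc_of_Ioo ht
    obtain ⟨hxd, hxm⟩ := hxt ht
    obtain ⟨hyd, hym⟩ := hyt ht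
    have h0 : x t - y t ≠ 0 := sub_ne_zero.2 (hne t htI)
    have hder : HasDerivAt f (D t) t :=
      auxHasDerivAtNorm (g := fun s => x s - y s) (hxd.sub hyd) h0
    refine ⟨hder, ?_⟩
    exact hdir t (x t) (hmem t htI).1 (y t) (hmem t htI).2 (hne t htI) (x' t) hxm (y' t) hym
  constructor
  · filter_upwards [hA] with t hAt ht
    rw [(hAt ht).1.deriv]
    exact (hAt ht).2
  -- part 2
  set L' : NNReal := Lx + Ly with hL'
  set L : ℝ := (L' : ℝ) with hLdef
  have hL0 : 0 ≤ L := L'.coe_nonneg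
  -- f is L-Lipschitz on Icc a b
  have hflip : ∀ s ∈ Set.Icc a b, ∀ u ∈ Set.Icc a b, |f s - f u| ≤ L * |s - u| := by
    intro s hs u hu
    have h1 : dist (x s) (x u) ≤ (Lx : ℝ) * dist s u := hxLip.dist_le_mul s hs u hu
    have h2 : dist (y s) (y u) ≤ (Ly : ℝ) * dist s u := hyLip.dist_le_mul s hs u hu
    have h3 : |f s - f u| ≤ ‖(x s - y s) - (x u - y u)‖ := abs_norm_sub_norm_le _ _
    have h4 : ‖(x s - y s) - (x u - y u)‖ ≤ ‖x s - x u‖ + ‖y s - y u‖ := by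
      have : (x s - y s) - (x u - y u) = (x s - x u) - (y s - y u) := by abel
      rw [this]
      exact norm_sub_le _ _
    rw [dist_eq_norm] at h1 h2
    rw [Real.dist_eq] at h1 h2
    have : (L' : ℝ) = (Lx : ℝ) + (Ly : ℝ) := by simp [hL']
    rw [hLdef, this]
    calc |f s - f u| ≤ ‖x s - x u‖ + ‖y s - y u‖ := h3.trans h4
      _ ≤ (Lx : ℝ) * |s - u| + (Ly : ℝ) * |s - u| := add_le_add h1 h2
      _ = ((Lx : ℝ) + (Ly : ℝ)) * |s - u| := by ring
  -- projection onto Icc a b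
  set proj : ℝ → ℝ := fun t => max a (min t b) with hproj
  have hprojmem : ∀ t, proj t ∈ Set.Icc a b :=
    fun t => ⟨le_max_left _ _, max_le hab.le (min_le_right _ _)⟩
  have hprojeq : ∀ t ∈ Set.Icc a b, proj t = t := by
    intro t ht
    simp only [hproj]
    rw [min_eq_left ht.2, max_eq_right ht.1]
  have hprojlip : ∀ s u : ℝ, |proj s - proj u| ≤ |s - u| := by
    intro s u
    have h1 : |max a (min s b) - max a (min u b)| ≤ |min s b - min u b| := by
      rw [max_comm a (min s b), max_comm a (min u b)]
      exact abs_max_sub_max_le_abs _ _ _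
    refine h1.trans ?_
    have := abs_min_sub_min_le_max s b u b
    simpa using this.trans (max_le le_rfl (by simp [abs_nonneg]))
  -- the monotone auxiliary function
  set h : ℝ → ℝ := fun t => L * t - f (proj t) with hh
  have hmono : Monotone h := by
    intro s u hsu
    have key : f (proj u) - f (proj s) ≤ L * (u - s) := by
      calc f (proj u) - f (proj s) ≤ |f (proj u) - f (proj s)| := le_abs_self _
        _ ≤ L * |proj u - proj s| := hflip _ (hprojmem u) _ (hprojmem s)
        _ ≤ L * |u - s| := by
            exact mul_le_mul_of_nonneg_left (hprojlip u s) hL0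
        _ = L * (u - s) := by rw [abs_of_nonneg (sub_nonneg.2 hsu)]
    simp only [hh]
    nlinarith
  have hcont : Continuous h := by
    have hfc : Continuous fun t => f (proj t) := by
      apply (LipschitzWith.of_dist_le_mul (K := L') (f := fun t => f (proj t)) ?_).continuous
      intro s u
      rw [Real.dist_eq, Real.dist_eq]
      exact (hflip _ (hprojmem s) _ (hprojmem u)).trans
        (mul_le_mul_of_nonneg_left (hprojlip s u) hL0)
    exact (continuous_const.mul continuous_id).sub hfc
  set sf := hmono.stieltjesFunction with hsf
  have hsf_eq : ∀ u, sf u = h u := by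
    intro u
    rw [hsf, hmono.stieltjesFunction_eq]
    exact rightLim_eq_of_tendsto (h := nhdsGT_neBot u)
      ((hcont.tendsto u).mono_left nhdsWithin_le_nhds)
  -- a.e. lower bound on the Radon-Nikodym derivative
  have hB : ∀ᵐ t ∂volume, t ∈ Set.Ioo a b →
      ENNReal.ofReal (L + c) ≤ Measure.rnDeriv sf.measure volume t := by
    filter_upwards [hA, hmono.ae_hasDerivAt, Measure.rnDeriv_lt_top sf.measure volume]
      with t hAt hht hlt ht
    obtain ⟨hfd, hDle⟩ := hAt ht
    -- near t, h equals L*s - f s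
    have hev : (fun s => L * s - f s) =ᶠ[nhds t] h := by
      filter_upwards [isOpen_Ioo.mem_nhds ht] with s hs
      simp only [hh, hprojeq s (Set.mem_Icc_of_Ioo hs)]
    have hhd : HasDerivAt h (L - D t) t := by
      have := (((hasDerivAt_id t).const_mul L).sub hfd).congr_of_eventuallyEq hev.symm
      simpa using this
    have huniq : (Measure.rnDeriv sf.measure volume t).toReal = L - D t :=
      hht.unique hhd
    apply ENNReal.ofReal_le_of_le_toReal
    rw [huniq]
    linarith
  intro t ht _
  -- integral estimate on Ioc a t
  have htb : t ≤ b := ht.2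
  have hstep : ENNReal.ofReal ((L + c) * (t - a)) ≤ ENNReal.ofReal (h t - h a) := by
    have e1 : ENNReal.ofReal ((L + c) * (t - a))
        = ∫⁻ _ in Set.Ioc a t, ENNReal.ofReal (L + c) ∂volume := by
      rw [setLIntegral_const, Real.volume_Ioc, ← ENNReal.ofReal_mul (by positivity)]
    have hbne : ∀ᵐ s ∂(volume : Measure ℝ), s ≠ b := by
      refine (MeasureTheory.ae_iff).mpr ?_
      have : {s : ℝ | ¬ s ≠ b} = {b} := by ext s; simp
      rw [this, Real.volume_singleton]
    have e2 : ∫⁻ _ in Set.Ioc a t, ENNReal.ofReal (L + c) ∂volume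
        ≤ ∫⁻ s in Set.Ioc a t, Measure.rnDeriv sf.measure volume s ∂volume := by
      apply lintegral_mono_ae
      filter_upwards [ae_restrict_mem measurableSet_Ioc, ae_restrict_of_ae hB,
        ae_restrict_of_ae hbne] with s hs hBs hsb
      exact hBs ⟨hs.1, lt_of_le_of_ne (hs.2.trans htb) hsb⟩
    have e3 : ∫⁻ s in Set.Ioc a t, Measure.rnDeriv sf.measure volume s ∂volume
        ≤ sf.measure (Set.Ioc a t) := Measure.setLIntegral_rnDeriv_le _
    have e4 : sf.measure (Set.Ioc a t) = ENNReal.ofReal (h t - h a) := by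
      rw [sf.measure_Ioc, hsf_eq, hsf_eq]
    calc ENNReal.ofReal ((L + c) * (t - a)) = _ := e1
      _ ≤ _ := e2
      _ ≤ _ := e3
      _ = _ := e4
  have hreal : (L + c) * (t - a) ≤ h t - h a := by
    have hha : h a ≤ h t := hmono ht.1
    exact (ENNReal.ofReal_le_ofReal_iff (sub_nonneg.2 hha)).1 hstep
  have hta : h t = L * t - f t := by simp only [hh, hprojeq t ht]
  have haa : h a = L * a - f a := by
    simp only [hh, hprojeq a (Set.left_mem_Icc.2 hab.le)]
  have : f t ≤ f a - c * (t - a) := by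
    rw [hta, haa] at hreal; nlinarith
  simpa [hf, hc] using this
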